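/- For p ∈ ℕ, s ∈ ℤ, and τ,w in the upper half-plane with w ≠ τ, the completed rank-one false theta function ψ̂^{[A₁]}_{p,s}(τ,w) := Σ_{n∈ℤ+s/(2p)} erf(−i√(2πip(w−τ)) n) q^{pn²} (with q := e^{2πiτ}) admits the Eichler integral representation ψ̂^{[A₁]}_{p,s}(τ,w) = √(2p) ∫_τ^w θ^{[1]}_{p,s}(w₁)/√(i(w₁−τ)) dw₁, where θ^{[1]}_{p,s}(τ) := Σ_{n∈ℤ+s/(2p)} n q^{pn²}, the integral is along a path from τ to w not crossing the vertical branch cut of √(i(w₁−τ)), and all square roots are principal. -/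

import Mathlib

open MeasureTheory
open scoped Real

noncomputable section

/-- The entire error function `erf(z) = (2/√π) ∫_0^z e^{−t²} dt`, parametrized along the
straight segment from `0` to `z`. -/
def cerf (z : ℂ) : ℂ :=
  ((2 / Real.sqrt Real.pi : ℝ) : ℂ) * ∫ t in (0:ℝ)..1, z * Complex.exp (-(((t:ℂ) * z) ^ 2))

/-- The weight `3/2` unary theta function `θ^{[1]}_{p,s}(τ) = Σ_{n∈ℤ+s/(2p)} n q^{pn²}`. -/
def theta1 (p : ℕ) (s : ℤ) (τ : ℂ) : ℂ :=
  ∑' ν : ℤ, ((ν : ℂ) + (s : ℂ) / (2 * (p : ℂ))) *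
    Complex.exp (2 * (Real.pi : ℂ) * Complex.I * τ * (p : ℂ) *
      ((ν : ℂ) + (s : ℂ) / (2 * (p : ℂ))) ^ 2)

/-- The completed rank-one false theta function
`ψ̂^{[A₁]}_{p,s}(τ,w) = Σ_{n∈ℤ+s/(2p)} erf(−i√(2πip(w−τ)) n) q^{pn²}`. -/
def psiA1 (p : ℕ) (s : ℤ) (τ w : ℂ) : ℂ :=
  ∑' ν : ℤ,
    cerf (-Complex.I * (2 * (Real.pi : ℂ) * Complex.I * (p : ℂ) * (w - τ)) ^ ((1:ℂ)/2) *
        ((ν : ℂ) + (s : ℂ) / (2 * (p : ℂ)))) *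
      Complex.exp (2 * (Real.pi : ℂ) * Complex.I * τ * (p : ℂ) *
        ((ν : ℂ) + (s : ℂ) / (2 * (p : ℂ))) ^ 2)

lemma cpow_half_mul_self {z : ℂ} (hz : z ≠ 0) :
    z ^ ((1:ℂ)/2) * z ^ ((1:ℂ)/2) = z := by
  rw [← Complex.cpow_add _ _ hz]
  norm_num

lemma cpow_half_pos_mul {r : ℝ} (hr : 0 < r) {z : ℂ} (hz : z ≠ 0) :
    ((r : ℂ) * z) ^ ((1:ℂ)/2) = ((Real.sqrt r : ℝ) : ℂ) * z ^ ((1:ℂ)/2) := by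
  have hr' : (r : ℂ) ≠ 0 := by exact_mod_cast hr.ne'
  rw [Complex.cpow_def_of_ne_zero (mul_ne_zero hr' hz), Complex.cpow_def_of_ne_zero hz,
    Complex.log_ofReal_mul hr hz, add_mul, Complex.exp_add]
  congr 1
  have h1 : (Real.log r : ℂ) * ((1:ℂ)/2) = ((Real.log r / 2 : ℝ) : ℂ) := by push_cast; ring
  rw [h1, ← Complex.ofReal_exp]
  norm_cast
  rw [Real.sqrt_eq_rpow, Real.rpow_def_of_pos hr]
  ring_nf

lemma summable_nat_abs_mul_exp {k : ℝ} (hk : 0 < k) (r : ℝ) :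
    Summable (fun n : ℕ => |(n : ℝ) + r| * Real.exp (-(k * ((n:ℝ) + r) ^ 2))) := by
  set x := Real.exp (-(k/2)) with hxdef
  have hx0 : 0 < x := Real.exp_pos _
  have hx1 : x < 1 := Real.exp_lt_one_iff.2 (by linarith)
  have hsum : Summable (fun n : ℕ =>
      ((1+|r|) * Real.exp (k*r^2)) * ((n:ℝ) * x ^ n + x ^ n)) := by
    refine Summable.mul_left _ (Summable.add ?_ (summable_geometric_of_lt_one hx0.le hx1))
    simpa using summable_pow_mul_geometric_of_norm_lt_one 1
      (r := x) (by rwa [Real.norm_eq_abs, abs_of_pos hx0])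
  refine hsum.of_nonneg_of_le (fun n => by positivity) (fun n => ?_)
  have hn2 : (n:ℝ) ≤ (n:ℝ)^2 := by
    rcases Nat.eq_zero_or_pos n with h0 | h1
    · simp [h0]
    · have h1' : (1:ℝ) ≤ (n:ℝ) := by exact_mod_cast h1
      nlinarith
  have h1 : |(n:ℝ) + r| ≤ (1 + |r|) * ((n:ℝ) + 1) := by
    calc |(n:ℝ)+r| ≤ |(n:ℝ)| + |r| := abs_add_le _ _
    _ = (n:ℝ) + |r| := by rw [abs_of_nonneg (Nat.cast_nonneg n)]
    _ ≤ (1+|r|)*((n:ℝ)+1) := by nlinarith [abs_nonneg r, (Nat.cast_nonneg n : (0:ℝ) ≤ n)]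
  have h2 : Real.exp (-(k * ((n:ℝ)+r)^2)) ≤ Real.exp (k*r^2) * x ^ n := by
    rw [hxdef, ← Real.exp_nat_mul, ← Real.exp_add]
    apply Real.exp_le_exp.2
    nlinarith [sq_nonneg ((n:ℝ) + 2*r), mul_nonneg hk.le (sq_nonneg ((n:ℝ)+2*r)),
      mul_le_mul_of_nonneg_left hn2 (by linarith : (0:ℝ) ≤ k/2)]
  calc |(n:ℝ)+r| * Real.exp (-(k * ((n:ℝ)+r)^2))
      ≤ ((1+|r|)*((n:ℝ)+1)) * (Real.exp (k*r^2) * x ^ n) := by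
        exact mul_le_mul h1 h2 (Real.exp_pos _).le (by positivity)
    _ = ((1+|r|) * Real.exp (k*r^2)) * ((n:ℝ) * x ^ n + x ^ n) := by ring

lemma summable_int_abs_mul_exp {k : ℝ} (hk : 0 < k) (r : ℝ) :
    Summable (fun ν : ℤ => |(ν:ℝ) + r| * Real.exp (-(k * ((ν:ℝ) + r) ^ 2))) := by
  refine Summable.of_nat_of_neg ?_ ?_
  · exact (summable_nat_abs_mul_exp hk r).congr (fun n => by push_cast; ring_nf)
  · refine (summable_nat_abs_mul_exp hk (-r)).congr (fun n => ?_)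
    push_cast
    rw [show (n:ℝ) + -r = -(-(n:ℝ) + r) by ring, abs_neg, neg_sq]

lemma integral_Ioc01_sqrt_subst (g : ℝ → ℂ) :
    ∫ t in Set.Ioc (0:ℝ) 1, g t = ∫ u in Set.Ioc (0:ℝ) 1, (2*u) • g (u^2) := by
  have himg : (fun u : ℝ => u^2) '' Set.Ioc 0 1 = Set.Ioc 0 1 := by
    ext t
    constructor
    · rintro ⟨u, ⟨hu0, hu1⟩, rfl⟩
      refine ⟨by positivity, ?_⟩
      have h2 : u^2 ≤ 1 := by nlinarith [mul_le_mul hu1 hu1 hu0.le zero_le_one]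
      simpa using h2
    · rintro ⟨ht0, ht1⟩
      exact ⟨Real.sqrt t, ⟨Real.sqrt_pos.2 ht0, Real.sqrt_le_one.2 ht1⟩, Real.sq_sqrt ht0.le⟩
  have hinj : Set.InjOn (fun u : ℝ => u^2) (Set.Ioc 0 1) := by
    intro a ha b hb h
    simp only at h
    calc a = Real.sqrt (a^2) := (Real.sqrt_sq ha.1.le).symm
    _ = Real.sqrt (b^2) := by rw [h]
    _ = b := Real.sqrt_sq hb.1.le
  have hder : ∀ x ∈ Set.Ioc (0:ℝ) 1,
      HasDerivWithinAt (fun u : ℝ => u^2) (2*x) (Set.Ioc 0 1) x := by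
    intro x _
    simpa using (hasDerivAt_pow 2 x).hasDerivWithinAt
  have := integral_image_eq_integral_abs_deriv_smul (f' := fun u : ℝ => 2*u)
    measurableSet_Ioc hder hinj g
  rw [himg] at this
  rw [this]
  refine setIntegral_congr_fun measurableSet_Ioc (fun u hu => ?_)
  rw [abs_of_pos (by linarith [hu.1] : (0:ℝ) < 2*u)]
lemma term_eq (p : ℕ) (hp : 0 < p) (τ c : ℂ) (hc : c ≠ 0) (a : ℝ) :
    cerf (-Complex.I * (2 * (Real.pi : ℂ) * Complex.I * (p : ℂ) * c) ^ ((1:ℂ)/2) * (a:ℂ)) *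
      Complex.exp (2 * (Real.pi : ℂ) * Complex.I * τ * (p : ℂ) * (a:ℂ)^2) =
    ((Real.sqrt (2*p) : ℝ) : ℂ) *
      ∫ t in Set.Ioc (0:ℝ) 1,
        c * ((a:ℂ) * Complex.exp (2 * (Real.pi : ℂ) * Complex.I * (τ + (t:ℂ)*c) * (p:ℂ) * (a:ℂ)^2)) /
          (Complex.I * ((t:ℂ) * c)) ^ ((1:ℂ)/2) := by
  have hπ0 : (0:ℝ) < Real.pi := Real.pi_pos
  set Z : ℂ := Complex.I * c with hZdef
  have hZ : Z ≠ 0 := mul_ne_zero Complex.I_ne_zero hc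
  have hhalf : Z ^ ((1:ℂ)/2) * Z ^ ((1:ℂ)/2) = Z := cpow_half_mul_self hZ
  have hZh : Z ^ ((1:ℂ)/2) ≠ 0 := by
    intro h
    rw [h, mul_zero] at hhalf
    exact hZ hhalf.symm
  set E : ℝ → ℂ := fun u =>
    Complex.exp (2 * (Real.pi:ℂ) * Complex.I * (p:ℂ) * ((a:ℝ):ℂ)^2 * (τ + (u:ℂ)*c)) with hE
  set B : ℂ := (2 * (Real.pi : ℂ) * Complex.I * (p : ℂ) * c) ^ ((1:ℂ)/2) with hBdef
  have hBne : 2 * (Real.pi : ℂ) * Complex.I * (p : ℂ) * c ≠ 0 := by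
    apply mul_ne_zero (mul_ne_zero (mul_ne_zero _ Complex.I_ne_zero) _) hc
    · norm_cast; positivity
    · exact_mod_cast hp.ne'
  have hB2 : B * B = 2 * (Real.pi : ℂ) * Complex.I * (p : ℂ) * c := by
    rw [hBdef]; exact cpow_half_mul_self hBne
  set z : ℂ := -Complex.I * B * (a:ℂ) with hzdef
  -- RHS: rewrite integrand
  have hRint : ∀ t ∈ Set.Ioc (0:ℝ) 1,
      c * ((a:ℂ) * Complex.exp (2 * (Real.pi : ℂ) * Complex.I * (τ + (t:ℂ)*c) * (p:ℂ) * (a:ℂ)^2)) /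
          (Complex.I * ((t:ℂ) * c)) ^ ((1:ℂ)/2)
      = (c * (a:ℂ) / Z ^ ((1:ℂ)/2)) * (E t * ((Real.sqrt t : ℝ):ℂ)⁻¹) := by
    intro t ht
    have hbase : Complex.I * ((t:ℂ)*c) = ((t:ℝ):ℂ) * Z := by rw [hZdef]; ring
    rw [hbase, cpow_half_pos_mul ht.1 hZ]
    have hEt : Complex.exp (2 * (Real.pi : ℂ) * Complex.I * (τ + (t:ℂ)*c) * (p:ℂ) * (a:ℂ)^2)
        = E t := by
      rw [hE]; ring_nf
    rw [hEt]
    have hst : ((Real.sqrt t : ℝ):ℂ) ≠ 0 := by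
      exact_mod_cast (Real.sqrt_pos.2 ht.1).ne'
    field_simp
  rw [setIntegral_congr_fun measurableSet_Ioc hRint, MeasureTheory.integral_const_mul _ _]
  -- change of variables on the RHS integral
  rw [integral_Ioc01_sqrt_subst (fun t => E t * ((Real.sqrt t : ℝ):ℂ)⁻¹)]
  have hCOV : ∀ u ∈ Set.Ioc (0:ℝ) 1,
      (2*u) • (E (u^2) * ((Real.sqrt (u^2) : ℝ):ℂ)⁻¹) = (2:ℂ) * E (u^2) := by
    intro u hu
    rw [Real.sqrt_sq hu.1.le, Complex.real_smul]
    have hu0 : ((u:ℝ):ℂ) ≠ 0 := by exact_mod_cast hu.1.ne'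
    push_cast
    field_simp
  rw [setIntegral_congr_fun measurableSet_Ioc hCOV, MeasureTheory.integral_const_mul _ _]
  -- LHS
  rw [cerf, intervalIntegral.integral_of_le zero_le_one, mul_assoc, ← integral_mul_const]
  have hLint : ∀ t ∈ Set.Ioc (0:ℝ) 1,
      z * Complex.exp (-(((t:ℂ) * z) ^ 2)) *
        Complex.exp (2 * (Real.pi : ℂ) * Complex.I * τ * (p : ℂ) * (a:ℂ)^2)
      = z * E (t^2) := by
    intro t ht
    have harg : -(((t:ℂ) * z) ^ 2) + 2 * (Real.pi : ℂ) * Complex.I * τ * (p : ℂ) * (a:ℂ)^2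
        = 2 * (Real.pi:ℂ) * Complex.I * (p:ℂ) * ((a:ℝ):ℂ)^2 * (τ + (((t^2 : ℝ)):ℂ)*c) := by
      rw [hzdef]
      push_cast
      linear_combination (-((t:ℂ)^2*(a:ℂ)^2*Complex.I^2)) * hB2 +
        (-(2*(Real.pi:ℂ)*Complex.I*(p:ℂ)*c*(t:ℂ)^2*(a:ℂ)^2)) * Complex.I_sq
    rw [mul_assoc, ← Complex.exp_add, harg]
  rw [setIntegral_congr_fun measurableSet_Ioc hLint, MeasureTheory.integral_const_mul _ _]
  -- constant identity
  have hB : B = ((Real.sqrt (2*Real.pi*p) : ℝ):ℂ) * Z ^ ((1:ℂ)/2) := by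
    rw [hBdef, show 2 * (Real.pi : ℂ) * Complex.I * (p : ℂ) * c
        = ((2*Real.pi*(p:ℝ) : ℝ):ℂ) * Z by push_cast; rw [hZdef]; ring,
      cpow_half_pos_mul (by positivity) hZ]
  have hsp : Real.sqrt (2*Real.pi*(p:ℝ)) = Real.sqrt (2*(p:ℝ)) * Real.sqrt Real.pi := by
    rw [← Real.sqrt_mul (by positivity)]
    ring_nf
  have hπ : ((Real.sqrt Real.pi : ℝ):ℂ) ≠ 0 := by
    exact_mod_cast (Real.sqrt_pos.2 hπ0).ne'
  have hconst : ((2 / Real.sqrt Real.pi : ℝ) : ℂ) * z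
      = ((Real.sqrt (2*p) : ℝ) : ℂ) * (c * (a:ℂ) / Z ^ ((1:ℂ)/2)) * 2 := by
    have h1 : c * (a:ℂ) / Z ^ ((1:ℂ)/2) = -Complex.I * Z ^ ((1:ℂ)/2) * (a:ℂ) := by
      rw [div_eq_iff hZh]
      linear_combination (Complex.I * (a:ℂ)) * hhalf + (Complex.I * (a:ℂ)) * hZdef +
        ((a:ℂ) * c) * Complex.I_sq
    have hpi1 : ((Real.sqrt Real.pi : ℝ):ℂ)⁻¹ * ((Real.sqrt Real.pi : ℝ):ℂ) = 1 :=
      inv_mul_cancel₀ hπ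
    rw [hzdef, hB, hsp, h1]
    simp only [Complex.ofReal_div, Complex.ofReal_mul, Complex.ofReal_ofNat]
    linear_combination
      (-2*Complex.I*((Real.sqrt (2*p):ℝ):ℂ)*Z^((1:ℂ)/2)*(a:ℂ)) * hpi1
  calc ((2 / Real.sqrt Real.pi : ℝ) : ℂ) * (z * ∫ t in Set.Ioc (0:ℝ) 1, E (t^2))
      = (((2 / Real.sqrt Real.pi : ℝ) : ℂ) * z) * ∫ t in Set.Ioc (0:ℝ) 1, E (t^2) := by ring
    _ = _ := by rw [hconst]; ring

/-- the Eichler integral representation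
`ψ̂^{[A₁]}_{p,s}(τ,w) = √(2p) ∫_τ^w θ^{[1]}_{p,s}(w₁)/√(i(w₁−τ)) dw₁`, the integral being
parametrized along the path `w₁ = τ + t(w−τ)`, `t ∈ [0,1]`, with principal square roots. -/
theorem statement15 (p : ℕ) (hp : 0 < p) (s : ℤ) (τ w : ℂ)
    (hτ : 0 < τ.im) (hw : 0 < w.im) (hne : w ≠ τ) :
    psiA1 p s τ w =
      ((Real.sqrt (2 * p) : ℝ) : ℂ) *
        ∫ t in (0:ℝ)..1, (w - τ) * theta1 p s (τ + (t:ℂ) * (w - τ)) /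
          (Complex.I * ((τ + (t:ℂ) * (w - τ)) - τ)) ^ ((1:ℂ)/2) := by
  have hπ0 : (0:ℝ) < Real.pi := Real.pi_pos
  have hc : w - τ ≠ 0 := sub_ne_zero.2 hne
  set c : ℂ := w - τ with hcdef
  set r : ℝ := (s:ℝ) / (2*(p:ℝ)) with hrdef
  have hcast : ∀ ν : ℤ, ((ν:ℂ) + (s:ℂ)/(2*(p:ℂ))) = ((((ν:ℝ) + r : ℝ)):ℂ) := by
    intro ν; rw [hrdef]; push_cast; ring
  set δ : ℝ := min τ.im w.im with hδdef
  have hδ : 0 < δ := lt_min hτ hw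
  set k : ℝ := 2*Real.pi*(p:ℝ)*δ with hkdef
  have hk : 0 < k := by positivity
  set Z : ℂ := Complex.I * c with hZdef
  have hZ : Z ≠ 0 := mul_ne_zero Complex.I_ne_zero hc
  have hhalf : Z ^ ((1:ℂ)/2) * Z ^ ((1:ℂ)/2) = Z := cpow_half_mul_self hZ
  have hZh : Z ^ ((1:ℂ)/2) ≠ 0 := by
    intro h
    rw [h, mul_zero] at hhalf
    exact hZ hhalf.symm
  set F : ℤ → ℝ → ℂ := fun ν t =>
    c * ((((ν:ℝ) + r : ℝ):ℂ)) / Z ^ ((1:ℂ)/2) *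
      (Complex.exp (2 * (Real.pi:ℂ) * Complex.I * (p:ℂ) * ((((ν:ℝ) + r : ℝ)):ℂ)^2 *
          (τ + (t:ℂ)*c)) * (((Real.sqrt t : ℝ)):ℂ)⁻¹) with hFdef
  -- pointwise identification of the integrand terms with `F`
  have hEq : ∀ (ν : ℤ), ∀ t ∈ Set.Ioc (0:ℝ) 1,
      c * ((((ν:ℝ) + r : ℝ):ℂ) *
          Complex.exp (2 * (Real.pi : ℂ) * Complex.I * (τ + (t:ℂ)*c) * (p:ℂ) *
            ((((ν:ℝ) + r : ℝ)):ℂ)^2)) /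
        (Complex.I * ((t:ℂ) * c)) ^ ((1:ℂ)/2) = F ν t := by
    intro ν t ht
    have hbase : Complex.I * ((t:ℂ)*c) = ((t:ℝ):ℂ) * Z := by rw [hZdef]; ring
    rw [hbase, cpow_half_pos_mul ht.1 hZ]
    have hEt : Complex.exp (2 * (Real.pi : ℂ) * Complex.I * (τ + (t:ℂ)*c) * (p:ℂ) *
          ((((ν:ℝ) + r : ℝ)):ℂ)^2)
        = Complex.exp (2 * (Real.pi:ℂ) * Complex.I * (p:ℂ) * ((((ν:ℝ) + r : ℝ)):ℂ)^2 *
          (τ + (t:ℂ)*c)) := by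
      ring_nf
    rw [hEt, hFdef]
    have hst : ((Real.sqrt t : ℝ):ℂ) ≠ 0 := by
      exact_mod_cast (Real.sqrt_pos.2 ht.1).ne'
    field_simp
  -- norm bound on the exponential factor
  have him : ∀ t ∈ Set.Ioc (0:ℝ) 1, δ ≤ (τ + (t:ℂ)*c).im := by
    intro t ht
    have h1 : (τ + (t:ℂ)*c).im = τ.im + t*(w.im - τ.im) := by
      rw [hcdef]
      simp [Complex.add_im, Complex.mul_im, Complex.sub_im, Complex.sub_re]
    rw [h1, hδdef]
    rcases le_total τ.im w.im with h | h
    · simp only [min_eq_left h]; nlinarith [ht.1.le, ht.2]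
    · simp only [min_eq_right h]; nlinarith [ht.1.le, ht.2]
  have hnorm : ∀ (ν : ℤ), ∀ t ∈ Set.Ioc (0:ℝ) 1,
      ‖Complex.exp (2 * (Real.pi:ℂ) * Complex.I * (p:ℂ) * ((((ν:ℝ) + r : ℝ)):ℂ)^2 *
          (τ + (t:ℂ)*c))‖ ≤ Real.exp (-(k * (((ν:ℝ)+r))^2)) := by
    intro ν t ht
    have harg : 2 * (Real.pi:ℂ) * Complex.I * (p:ℂ) * ((((ν:ℝ) + r : ℝ)):ℂ)^2 * (τ + (t:ℂ)*c)
        = ((2*Real.pi*(p:ℝ)*((ν:ℝ)+r)^2 : ℝ):ℂ) * ((τ + (t:ℂ)*c) * Complex.I) := by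
      push_cast; ring
    rw [Complex.norm_exp, harg, Complex.re_ofReal_mul, Complex.mul_I_re]
    apply Real.exp_le_exp.2
    have h1 : δ ≤ (τ + (t:ℂ)*c).im := him t ht
    have h2 : (0:ℝ) ≤ 2*Real.pi*(p:ℝ)*((ν:ℝ)+r)^2 := by positivity
    rw [hkdef]
    nlinarith [mul_le_mul_of_nonneg_left h1 h2]
  -- integrability of the inverse square root
  have hInt1 : IntegrableOn (fun t : ℝ => (Real.sqrt t)⁻¹) (Set.Ioc 0 1) := by
    have h1 : IntervalIntegrable (fun t : ℝ => t ^ (-(1/2) : ℝ)) volume 0 1 :=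
      intervalIntegral.intervalIntegrable_rpow' (by norm_num)
    rw [intervalIntegrable_iff, Set.uIoc_of_le zero_le_one] at h1
    refine h1.congr_fun (fun t ht => ?_) measurableSet_Ioc
    beta_reduce
    rw [Real.rpow_neg ht.1.le, ← Real.sqrt_eq_rpow]
  have hIntC : IntegrableOn (fun t : ℝ => (((Real.sqrt t : ℝ)):ℂ)⁻¹) (Set.Ioc 0 1) := by
    exact (hInt1.ofReal).congr (ae_of_all _ (fun t => by simp))
  -- continuity of the exponential factor
  have hcont : ∀ ν : ℤ, Continuous (fun t : ℝ =>
      Complex.exp (2 * (Real.pi:ℂ) * Complex.I * (p:ℂ) * ((((ν:ℝ) + r : ℝ)):ℂ)^2 *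
        (τ + (t:ℂ)*c))) := by
    intro ν
    apply Complex.continuous_exp.comp
    continuity
  -- integrability of each F ν
  have hFint : ∀ ν : ℤ, Integrable (F ν) (volume.restrict (Set.Ioc (0:ℝ) 1)) := by
    intro ν
    rw [hFdef]
    refine Integrable.const_mul ?_ _
    refine Integrable.bdd_mul (c := 1) hIntC (hcont ν).aestronglyMeasurable ?_
    filter_upwards [ae_restrict_mem measurableSet_Ioc] with t ht
    refine (hnorm ν t ht).trans ?_
    rw [Real.exp_le_one_iff]
    have : (0:ℝ) ≤ k * (((ν:ℝ)+r))^2 := by positivity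
    linarith
  -- the value of the comparison integral
  set Iv : ℝ := ∫ t in Set.Ioc (0:ℝ) 1, (Real.sqrt t)⁻¹ with hIvdef
  -- summability of the integrals of the norms
  have hFsum : Summable (fun ν : ℤ => ∫ t in Set.Ioc (0:ℝ) 1, ‖F ν t‖) := by
    have hS : Summable (fun ν : ℤ =>
        (‖c‖ / ‖Z ^ ((1:ℂ)/2)‖ * Iv) * (|(ν:ℝ) + r| * Real.exp (-(k * (((ν:ℝ)+r))^2)))) :=
      (summable_int_abs_mul_exp hk r).mul_left _
    refine Summable.of_nonneg_of_le
      (fun ν => setIntegral_nonneg measurableSet_Ioc (fun t _ => norm_nonneg _))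
      (fun ν => ?_) hS
    have hMint : IntegrableOn (fun t : ℝ =>
        (‖c‖ * |(ν:ℝ) + r| / ‖Z ^ ((1:ℂ)/2)‖ * Real.exp (-(k * (((ν:ℝ)+r))^2))) *
          (Real.sqrt t)⁻¹) (Set.Ioc 0 1) := hInt1.const_mul _
    have hb : ∀ t ∈ Set.Ioc (0:ℝ) 1, ‖F ν t‖ ≤
        (‖c‖ * |(ν:ℝ) + r| / ‖Z ^ ((1:ℂ)/2)‖ * Real.exp (-(k * (((ν:ℝ)+r))^2))) *
          (Real.sqrt t)⁻¹ := by
      intro t ht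
      rw [hFdef]
      simp only [norm_mul, norm_div, norm_inv, Complex.norm_real, Real.norm_eq_abs,
        abs_of_nonneg (Real.sqrt_nonneg t)]
      have h1 := hnorm ν t ht
      have h2 : (0:ℝ) ≤ (Real.sqrt t)⁻¹ := by positivity
      have h3 : (0:ℝ) ≤ ‖c‖ * |(ν:ℝ) + r| / ‖Z ^ ((1:ℂ)/2)‖ := by positivity
      calc ‖c‖ * |(ν:ℝ) + r| / ‖Z ^ ((1:ℂ)/2)‖ *
            (‖Complex.exp (2 * (Real.pi:ℂ) * Complex.I * (p:ℂ) * ((((ν:ℝ) + r : ℝ)):ℂ)^2 *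
              (τ + (t:ℂ)*c))‖ * (Real.sqrt t)⁻¹)
          ≤ ‖c‖ * |(ν:ℝ) + r| / ‖Z ^ ((1:ℂ)/2)‖ *
            (Real.exp (-(k * (((ν:ℝ)+r))^2)) * (Real.sqrt t)⁻¹) := by
            refine mul_le_mul_of_nonneg_left ?_ h3
            exact mul_le_mul_of_nonneg_right h1 h2
        _ = ‖c‖ * |(ν:ℝ) + r| / ‖Z ^ ((1:ℂ)/2)‖ * Real.exp (-(k * (((ν:ℝ)+r))^2)) *
            (Real.sqrt t)⁻¹ := by ring
    calc (∫ t in Set.Ioc (0:ℝ) 1, ‖F ν t‖)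
        ≤ ∫ t in Set.Ioc (0:ℝ) 1,
            (‖c‖ * |(ν:ℝ) + r| / ‖Z ^ ((1:ℂ)/2)‖ * Real.exp (-(k * (((ν:ℝ)+r))^2))) *
              (Real.sqrt t)⁻¹ :=
          setIntegral_mono_on ((hFint ν).norm) hMint measurableSet_Ioc hb
      _ = (‖c‖ * |(ν:ℝ) + r| / ‖Z ^ ((1:ℂ)/2)‖ * Real.exp (-(k * (((ν:ℝ)+r))^2))) * Iv := by
          rw [hIvdef, MeasureTheory.integral_const_mul]
      _ = (‖c‖ / ‖Z ^ ((1:ℂ)/2)‖ * Iv) * (|(ν:ℝ) + r| * Real.exp (-(k * (((ν:ℝ)+r))^2))) := by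
          ring
  -- rewrite the right-hand side
  rw [intervalIntegral.integral_of_le zero_le_one]
  simp only [add_sub_cancel_left, theta1, hcast, ← tsum_mul_left, ← tsum_div_const]
  rw [setIntegral_congr_fun measurableSet_Ioc
    (fun t ht => tsum_congr (fun ν : ℤ => hEq ν t ht))]
  rw [← integral_tsum_of_summable_integral_norm hFint hFsum]
  -- rewrite the left-hand side termwise
  rw [psiA1]
  simp only [hcast]
  rw [tsum_congr (fun ν : ℤ => by
    rw [term_eq p hp τ c hc ((ν:ℝ)+r),
      setIntegral_congr_fun measurableSet_Ioc (hEq ν)])]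
  exact tsum_mul_left
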